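/- Let γ : X → ℂ be a generalized path, and let C be a connected component of γ⁻¹(S^{x,t,μ}_j) for some x, t ∈ [0,1], μ ∈ (0,1], j ∈ ℤ, such that proj⊥_t(γ(C)) is non-degenerate. Then for every ε > 0 there exists a subcontinuum D ⊆ C such that γ(D) is contained in the interior of S^{x,t,μ}_j and ‖γ(D)‖_t ≥ ‖γ(C)‖_t − ε. -/
import Mathlib


open Set MeasureTheory

noncomputable section

/-- The closed horizontal strip `S_j = {a + ib : a ∈ ℝ, b ∈ [j, j+1]} ⊆ ℂ`. -/
def hStrip (j : ℤ) : Set ℂ := {z : ℂ | (j : ℝ) ≤ z.im ∧ z.im ≤ (j : ℝ) + 1}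

/-- The strip `S^{x,t,μ}_j = μ·e^{tπi}·(S_j + ix)`. -/
def Strip (x t μ : ℝ) (j : ℤ) : Set ℂ :=
  (fun z : ℂ => (μ : ℂ) * Complex.exp ((t : ℂ) * (Real.pi : ℂ) * Complex.I) *
    (z + (x : ℂ) * Complex.I)) '' hStrip j

/-- The orthogonal projection of `ℂ` onto the line `{r·e^{(t+1/2)πi} : r ∈ ℝ}`,
composed with the natural isometric identification of this line with `ℝ`
(so that Euclidean diameters of subsets are preserved). -/
def projPerp (t : ℝ) (z : ℂ) : ℝ :=
  (z * Complex.exp (-(((t : ℂ) + 1 / 2) * (Real.pi : ℂ) * Complex.I))).re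

/-- `‖A‖_t`, the (Euclidean) diameter of the orthogonal projection `proj⊥_t(A)`. -/
def normT (t : ℝ) (A : Set ℂ) : ℝ := Metric.diam (projPerp t '' A)

/-- The collection of all connected components of the sets `γ⁻¹(S^{x,t,μ}_j)`, `j ∈ ℤ`. -/
def stripComponents {X : Type*} [TopologicalSpace X] (γ : X → ℂ) (x t μ : ℝ) : Set (Set X) :=
  {C | ∃ j : ℤ, ∃ p ∈ γ ⁻¹' Strip x t μ j, C = connectedComponentIn (γ ⁻¹' Strip x t μ j) p}

/-- The components whose image under `proj⊥_t ∘ γ` is non-degenerate. -/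
def ndComponents {X : Type*} [TopologicalSpace X] (γ : X → ℂ) (x t μ : ℝ) : Set (Set X) :=
  {C | C ∈ stripComponents γ x t μ ∧ (projPerp t '' (γ '' C)).Nontrivial}

/-- `L^{x,t,μ}(γ) = ∑ₙ ‖γ(C_n)‖_t / 2ⁿ`, where `⟨C_n⟩ₙ` enumerates the components of
the sets `γ⁻¹(S^{x,t,μ}_j)` (`j ∈ ℤ`) with non-degenerate projection, in non-increasing
order of `‖γ(C_n)‖_t`.  Since the weights `2⁻ⁿ` are strictly decreasing, this sum is equal
to the supremum, over all finite injective enumerations `e` of such components, of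
`∑ₙ ‖γ(e n)‖_t / 2ⁿ`; we take this supremum as the formal definition. -/
def Lfn {X : Type*} [TopologicalSpace X] (γ : X → ℂ) (x t μ : ℝ) : ℝ :=
  sSup {r : ℝ | ∃ (N : ℕ) (e : Fin N → Set X), Function.Injective e ∧
    (∀ n, e n ∈ ndComponents γ x t μ) ∧
    r = ∑ n : Fin N, normT t (γ '' e n) / (2 : ℝ) ^ (n : ℕ)}

/-- `len(γ) = ∫₀¹∫₀¹∫₀¹ L^{x,t,μ}(γ) dx dt dμ`. -/
def len {X : Type*} [TopologicalSpace X] (γ : X → ℂ) : ℝ :=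
  ∫ μ in (0:ℝ)..1, ∫ t in (0:ℝ)..1, ∫ x in (0:ℝ)..1, Lfn γ x t μ



/-- In a compact Hausdorff space, a connected component disjoint from a closed set
can be separated from it by a clopen set. -/
lemma clopen_sep {α : Type*} [TopologicalSpace α] [T2Space α] [CompactSpace α]
    (x : α) {F : Set α} (hF : IsClosed F) (h : Disjoint (connectedComponent x) F) :
    ∃ Z : Set α, IsClopen Z ∧ x ∈ Z ∧ Disjoint Z F := by
  classical
  have hFc : IsCompact F := hF.isCompact
  have hcover : F ⊆ ⋃ Z : {Z : Set α // IsClopen Z ∧ x ∈ Z}, ((Z : Set α)ᶜ) := by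
    intro y hy
    by_contra hy'
    simp only [mem_iUnion, mem_compl_iff, not_exists, not_not] at hy'
    have hmem : y ∈ connectedComponent x := by
      rw [connectedComponent_eq_iInter_isClopen, mem_iInter]
      exact fun Z => hy' Z
    exact Set.disjoint_left.mp h hmem hy
  obtain ⟨s, hs⟩ := hFc.elim_finite_subcover _
    (fun Z : {Z : Set α // IsClopen Z ∧ x ∈ Z} => Z.2.1.compl.isOpen) hcover
  refine ⟨⋂ Z ∈ s, (Z : Set α), isClopen_biInter_finset (fun Z _ => Z.2.1), ?_, ?_⟩
  · exact mem_iInter₂.mpr fun Z _ => Z.2.2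
  · rw [Set.disjoint_left]
    intro y hy hyF
    obtain ⟨Z, hZs, hZ⟩ := mem_iUnion₂.mp (hs hyF)
    exact hZ (mem_iInter₂.mp hy Z hZs)

/-- In a compact connected Hausdorff space, if `f` takes values below `u` and above `v`,
then some subcontinuum maps into `[u,v]` hitting both endpoints. -/
lemma key_continuum {α : Type*} [TopologicalSpace α] [T2Space α] [CompactSpace α]
    [PreconnectedSpace α] (f : α → ℝ) (hf : Continuous f) (u v : ℝ) (huv : u < v)
    (hu : ∃ p, f p < u) (hv : ∃ q, v < f q) :
    ∃ D : Set α, IsCompact D ∧ IsConnected D ∧ D ⊆ f ⁻¹' Icc u v ∧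
      (∃ p ∈ D, f p = u) ∧ (∃ q ∈ D, f q = v) := by
  classical
  set A : Set α := f ⁻¹' Icc u v with hA
  have hAcl : IsClosed A := isClosed_Icc.preimage hf
  haveI : CompactSpace A := isCompact_iff_compactSpace.mp hAcl.isCompact
  set g : A → ℝ := fun z => f z.1 with hg
  have hgc : Continuous g := hf.comp continuous_subtype_val
  set Fu : Set A := g ⁻¹' {u} with hFu
  set Fv : Set A := g ⁻¹' {v} with hFv
  have hFucl : IsClosed Fu := isClosed_singleton.preimage hgc
  have hFvcl : IsClosed Fv := isClosed_singleton.preimage hgc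
  have main : ¬ ∀ z : A, Disjoint (connectedComponent z) Fu ∨
      Disjoint (connectedComponent z) Fv := by
    intro hall
    -- choose a clopen neighborhood of each point avoiding one of the fibers
    have hch : ∀ z : A, ∃ Z : Set A, IsClopen Z ∧ z ∈ Z ∧
        (Disjoint Z Fu ∨ Disjoint Z Fv) := by
      intro z
      rcases hall z with h | h
      · obtain ⟨Z, hZ1, hZ2, hZ3⟩ := clopen_sep z hFucl h
        exact ⟨Z, hZ1, hZ2, Or.inl hZ3⟩
      · obtain ⟨Z, hZ1, hZ2, hZ3⟩ := clopen_sep z hFvcl h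
        exact ⟨Z, hZ1, hZ2, Or.inr hZ3⟩
    choose Z hZclopen hZmem hZdisj using hch
    obtain ⟨s, hs⟩ := isCompact_univ.elim_finite_subcover Z
      (fun z => (hZclopen z).isOpen) (fun z _ => mem_iUnion.mpr ⟨z, hZmem z⟩)
    set W : Set A := ⋃ z ∈ s, if Disjoint (Z z) Fu then Z z else ∅ with hW
    have hWclopen : IsClopen W :=
      isClopen_biUnion_finset (fun z _ => by
        split_ifs
        · exact hZclopen z
        · exact isClopen_empty)
    have hWFu : Disjoint W Fu := by
      rw [Set.disjoint_left]
      intro y hy hyFu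
      obtain ⟨z, hzs, hz⟩ := mem_iUnion₂.mp hy
      split_ifs at hz with hd
      · exact Set.disjoint_left.mp hd hz hyFu
      · exact hz
    have hFvW : Fv ⊆ W := by
      intro y hyFv
      obtain ⟨z, hzs, hz⟩ := mem_iUnion₂.mp (hs (mem_univ y))
      have hd : Disjoint (Z z) Fu := by
        rcases hZdisj z with h | h
        · exact h
        · exact absurd hyFv (Set.disjoint_left.mp h hz)
      exact mem_iUnion₂.mpr ⟨z, hzs, by rw [if_pos hd]; exact hz⟩
    -- build a separation of the whole space
    set S₁ : Set α := (Subtype.val '' W) ∪ {y | v ≤ f y} with hS₁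
    set S₂ : Set α := (Subtype.val '' Wᶜ) ∪ {y | f y ≤ u} with hS₂
    have hS₁cl : IsClosed S₁ := by
      refine IsClosed.union ?_ (isClosed_le continuous_const hf)
      exact (hWclopen.isClosed.isCompact.image continuous_subtype_val).isClosed
    have hS₂cl : IsClosed S₂ := by
      refine IsClosed.union ?_ (isClosed_le hf continuous_const)
      exact (hWclopen.compl.isClosed.isCompact.image continuous_subtype_val).isClosed
    have hcoverS : S₁ ∪ S₂ = univ := by
      apply eq_univ_of_forall
      intro y
      rcases le_or_gt (f y) u with h1 | h1
      · exact Or.inr (Or.inr h1)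
      rcases le_or_gt v (f y) with h2 | h2
      · exact Or.inl (Or.inr h2)
      have hyA : y ∈ A := ⟨h1.le, h2.le⟩
      by_cases hw : (⟨y, hyA⟩ : A) ∈ W
      · exact Or.inl (Or.inl ⟨⟨y, hyA⟩, hw, rfl⟩)
      · exact Or.inr (Or.inl ⟨⟨y, hyA⟩, hw, rfl⟩)
    have hdisjS : Disjoint S₁ S₂ := by
      rw [Set.disjoint_left]
      rintro y (hy1 | hy1) (hy2 | hy2)
      · obtain ⟨z₁, hz₁, rfl⟩ := hy1
        obtain ⟨z₂, hz₂, hz₂e⟩ := hy2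
        exact hz₂ ((Subtype.ext hz₂e) ▸ hz₁)
      · obtain ⟨z₁, hz₁, rfl⟩ := hy1
        have : f z₁.1 = u := le_antisymm hy2 z₁.2.1
        exact Set.disjoint_left.mp hWFu hz₁ this
      · obtain ⟨z₂, hz₂, rfl⟩ := hy2
        have : f z₂.1 = v := le_antisymm z₂.2.2 hy1
        exact hz₂ (hFvW this)
      · exact absurd (le_trans hy1 hy2) (not_le.mpr huv)
    obtain ⟨p, hp⟩ := hu
    obtain ⟨q, hq⟩ := hv
    have hpS₂ : p ∈ S₂ := Or.inr hp.le
    have hqS₁ : q ∈ S₁ := Or.inr hq.le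
    have hS₁clopen : IsClopen S₁ := by
      refine ⟨hS₁cl, ?_⟩
      have : S₁ = S₂ᶜ := by
        apply subset_antisymm
        · exact subset_compl_iff_disjoint_right.mpr hdisjS
        · intro y hy
          rcases (hcoverS ▸ mem_univ y : y ∈ S₁ ∪ S₂) with h | h
          · exact h
          · exact absurd h hy
      rw [this]
      exact hS₂cl.isOpen_compl
    rcases isClopen_iff.mp hS₁clopen with h | h
    · exact absurd hqS₁ (h ▸ notMem_empty q)
    · exact Set.disjoint_left.mp hdisjS (h ▸ mem_univ p) hpS₂
  push_neg at main
  obtain ⟨z, hz⟩ := main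
  obtain ⟨w₁, hw₁c, hw₁⟩ := Set.not_disjoint_iff.mp hz.1
  obtain ⟨w₂, hw₂c, hw₂⟩ := Set.not_disjoint_iff.mp hz.2
  refine ⟨Subtype.val '' connectedComponent z, ?_, ?_, ?_, ?_, ?_⟩
  · exact (isClosed_connectedComponent.isCompact).image continuous_subtype_val
  · exact isConnected_connectedComponent.image _ continuous_subtype_val.continuousOn
  · rintro y ⟨w, _, rfl⟩; exact w.2
  · exact ⟨w₁.1, ⟨w₁, hw₁c, rfl⟩, hw₁⟩
  · exact ⟨w₂.1, ⟨w₂, hw₂c, rfl⟩, hw₂⟩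
lemma projPerp_eq_im (t : ℝ) (z : ℂ) :
    projPerp t z = (z * Complex.exp (-((t : ℂ) * Real.pi * Complex.I))).im := by
  have h1 : Complex.exp (-(((t : ℂ) + 1/2) * Real.pi * Complex.I))
      = Complex.exp (-((t : ℂ) * Real.pi * Complex.I)) *
        Complex.exp (((-(Real.pi/2) : ℝ) : ℂ) * Complex.I) := by
    rw [← Complex.exp_add]; congr 1; push_cast; ring
  have h2 : Complex.exp (((-(Real.pi/2) : ℝ) : ℂ) * Complex.I) = -Complex.I := by
    rw [Complex.exp_mul_I, ← Complex.ofReal_cos, ← Complex.ofReal_sin]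
    simp [Real.cos_pi_div_two, Real.sin_pi_div_two]
  unfold projPerp
  rw [h1, ← mul_assoc, h2]
  simp

lemma projPerp_continuous (t : ℝ) : Continuous (projPerp t) :=
  Complex.continuous_re.comp (continuous_id.mul continuous_const)

lemma strip_eq (x t μ : ℝ) (hμ : 0 < μ) (j : ℤ) :
    Strip x t μ j = projPerp t ⁻¹' Icc (μ * (j + x)) (μ * (j + x) + μ) := by
  have hμne : (μ : ℂ) ≠ 0 := Complex.ofReal_ne_zero.mpr hμ.ne'
  have hEmul : Complex.exp ((t:ℂ) * Real.pi * Complex.I) *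
      Complex.exp (-((t:ℂ) * Real.pi * Complex.I)) = 1 := by
    rw [← Complex.exp_add, add_neg_cancel, Complex.exp_zero]
  ext z
  constructor
  · rintro ⟨w, ⟨hw1, hw2⟩, rfl⟩
    have hcalc : projPerp t ((μ:ℂ) * Complex.exp ((t:ℂ) * Real.pi * Complex.I) *
        (w + (x:ℂ) * Complex.I)) = μ * (w.im + x) := by
      rw [projPerp_eq_im]
      rw [show (μ:ℂ) * Complex.exp ((t:ℂ) * Real.pi * Complex.I) * (w + (x:ℂ) * Complex.I) *
          Complex.exp (-((t:ℂ) * Real.pi * Complex.I))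
          = (μ:ℂ) * (w + (x:ℂ) * Complex.I) * (Complex.exp ((t:ℂ) * Real.pi * Complex.I) *
            Complex.exp (-((t:ℂ) * Real.pi * Complex.I))) from by ring]
      rw [hEmul, mul_one]
      simp [Complex.mul_im]
    refine ⟨?_, ?_⟩ <;> rw [hcalc] <;> nlinarith
  · intro hz
    refine ⟨z * Complex.exp (-((t:ℂ) * Real.pi * Complex.I)) * (μ:ℂ)⁻¹ - (x:ℂ) * Complex.I,
      ⟨?_, ?_⟩, ?_⟩
    · have him : (z * Complex.exp (-((t:ℂ) * Real.pi * Complex.I)) * (μ:ℂ)⁻¹ -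
          (x:ℂ) * Complex.I).im = projPerp t z * μ⁻¹ - x := by
        rw [projPerp_eq_im, ← Complex.ofReal_inv]
        simp
      rw [him]
      have h1 : ((j:ℝ) + x) * μ ≤ projPerp t z := by
        have := hz.1; nlinarith
      have : ((j:ℝ) + x) ≤ projPerp t z / μ := (le_div_iff₀ hμ).mpr h1
      rw [div_eq_mul_inv] at this
      linarith
    · have him : (z * Complex.exp (-((t:ℂ) * Real.pi * Complex.I)) * (μ:ℂ)⁻¹ -
          (x:ℂ) * Complex.I).im = projPerp t z * μ⁻¹ - x := by
        rw [projPerp_eq_im, ← Complex.ofReal_inv]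
        simp
      rw [him]
      have h1 : projPerp t z ≤ ((j:ℝ) + x + 1) * μ := by
        have := hz.2; nlinarith
      have : projPerp t z / μ ≤ ((j:ℝ) + x + 1) := (div_le_iff₀ hμ).mpr h1
      rw [div_eq_mul_inv] at this
      linarith
    · show (μ:ℂ) * Complex.exp ((t:ℂ) * Real.pi * Complex.I) *
          (z * Complex.exp (-((t:ℂ) * Real.pi * Complex.I)) * (μ:ℂ)⁻¹ - (x:ℂ) * Complex.I +
            (x:ℂ) * Complex.I) = z
      rw [sub_add_cancel]
      rw [show (μ:ℂ) * Complex.exp ((t:ℂ) * Real.pi * Complex.I) *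
          (z * Complex.exp (-((t:ℂ) * Real.pi * Complex.I)) * (μ:ℂ)⁻¹)
          = z * (Complex.exp ((t:ℂ) * Real.pi * Complex.I) *
            Complex.exp (-((t:ℂ) * Real.pi * Complex.I))) * ((μ:ℂ) * (μ:ℂ)⁻¹) from by ring]
      rw [hEmul, mul_inv_cancel₀ hμne, mul_one, mul_one]

/-- **Lemma 2.2.** Let `γ : X → ℂ` be a generalized path and let `C` be a connected
component of `γ⁻¹(S^{x,t,μ}_j)` whose image under `proj⊥_t` is non-degenerate.  Then for
every `ε > 0` there is a subcontinuum `D ⊆ C` with `γ(D)` contained in the interior of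
`S^{x,t,μ}_j` and `‖γ(D)‖_t ≥ ‖γ(C)‖_t - ε`. -/
theorem exists_subcontinuum_in_interior
    {X : Type*} [MetricSpace X] [CompactSpace X] [ConnectedSpace X] [LocallyConnectedSpace X]
    (γ : X → ℂ) (hγ : Continuous γ)
    (x t μ : ℝ) (hx : x ∈ Icc (0:ℝ) 1) (ht : t ∈ Icc (0:ℝ) 1) (hμ : μ ∈ Ioc (0:ℝ) 1)
    (j : ℤ) (p : X) (hp : p ∈ γ ⁻¹' Strip x t μ j)
    (C : Set X) (hC : C = connectedComponentIn (γ ⁻¹' Strip x t μ j) p)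
    (hnd : (projPerp t '' (γ '' C)).Nontrivial)
    (ε : ℝ) (hε : 0 < ε) :
    ∃ D : Set X, D ⊆ C ∧ IsCompact D ∧ IsConnected D ∧
      γ '' D ⊆ interior (Strip x t μ j) ∧
      normT t (γ '' C) - ε ≤ normT t (γ '' D) := by

  obtain ⟨hμ0, hμ1⟩ := hμ
  set a := μ * (j + x) with ha
  set b := μ * (j + x) + μ with hb
  have hstrip : Strip x t μ j = projPerp t ⁻¹' Icc a b := strip_eq x t μ hμ0 j
  set f : X → ℝ := fun y => projPerp t (γ y) with hf
  have hfc : Continuous f := (projPerp_continuous t).comp hγ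
  have hpre : γ ⁻¹' Strip x t μ j = f ⁻¹' Icc a b := by rw [hstrip]; rfl
  have himg : ∀ S : Set X, projPerp t '' (γ '' S) = f '' S := fun S => by
    rw [Set.image_image]
  have hCconn : IsConnected C := hC ▸ isConnected_connectedComponentIn_iff.mpr hp
  have hFcl : IsClosed (γ ⁻¹' Strip x t μ j) := by
    rw [hpre]; exact isClosed_Icc.preimage hfc
  haveI : CompactSpace (γ ⁻¹' Strip x t μ j) := isCompact_iff_compactSpace.mp hFcl.isCompact
  have hCcomp : IsCompact C := by
    rw [hC, connectedComponentIn_eq_image hp]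
    exact (isClosed_connectedComponent.isCompact).image continuous_subtype_val
  have hCsub : C ⊆ f ⁻¹' Icc a b := by
    rw [hC, ← hpre]; exact connectedComponentIn_subset _ _
  set c := sInf (f '' C) with hc
  set d := sSup (f '' C) with hd
  have hImg : f '' C = Icc c d :=
    eq_Icc_of_connected_compact (hCconn.image f hfc.continuousOn) (hCcomp.image hfc)
  have hnd' : (f '' C).Nontrivial := by rw [← himg]; exact hnd
  have hcd : c < d := by
    obtain ⟨p1, hp1, p2, hp2, hne⟩ := hnd'
    rw [hImg] at hp1 hp2
    by_contra h
    push_neg at h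
    exact hne (le_antisymm (le_trans hp1.2 (h.trans hp2.1)) (le_trans hp2.2 (h.trans hp1.1)))
  have hsubab : Icc c d ⊆ Icc a b := hImg ▸ (Set.image_subset_iff.mpr hCsub)
  have hac : a ≤ c := (hsubab (left_mem_Icc.mpr hcd.le)).1
  have hdb : d ≤ b := (hsubab (right_mem_Icc.mpr hcd.le)).2
  set δ := min ε (d - c) / 4 with hδ
  have hδ0 : 0 < δ := div_pos (lt_min hε (by linarith)) (by norm_num)
  have hδε : δ ≤ ε / 4 := div_le_div_of_nonneg_right (min_le_left _ _) (by norm_num)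
  have hδdc : δ ≤ (d - c) / 4 := div_le_div_of_nonneg_right (min_le_right _ _) (by norm_num)
  set u := c + δ with hu
  set v := d - δ with hv
  have huv : u < v := by
    have : 2 * δ ≤ (d - c) / 2 := by linarith
    simp only [hu, hv]
    linarith
  haveI : CompactSpace C := isCompact_iff_compactSpace.mp hCcomp
  haveI : PreconnectedSpace C := Subtype.preconnectedSpace hCconn.isPreconnected
  obtain ⟨pc, hpc, hpcf⟩ : c ∈ f '' C := by rw [hImg]; exact left_mem_Icc.mpr hcd.le
  obtain ⟨qd, hqd, hqdf⟩ : d ∈ f '' C := by rw [hImg]; exact right_mem_Icc.mpr hcd.le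
  obtain ⟨D', hD'comp, hD'conn, hD'sub, ⟨pu, hpu, hpuu⟩, ⟨qv, hqv, hqvv⟩⟩ :=
    key_continuum (fun z : C => f z.1) (hfc.comp continuous_subtype_val) u v huv
      ⟨⟨pc, hpc⟩, by show f pc < u; rw [hpcf]; simp only [hu]; linarith⟩
      ⟨⟨qd, hqd⟩, by show v < f qd; rw [hqdf]; simp only [hv]; linarith⟩
  refine ⟨Subtype.val '' D', ?_, ?_, ?_, ?_, ?_⟩
  · rintro y ⟨w, _, rfl⟩; exact w.2
  · exact hD'comp.image continuous_subtype_val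
  · exact hD'conn.image _ continuous_subtype_val.continuousOn
  · have hIoo : projPerp t ⁻¹' Ioo a b ⊆ interior (Strip x t μ j) := by
      apply interior_maximal
      · rw [hstrip]; exact Set.preimage_mono Ioo_subset_Icc_self
      · exact isOpen_Ioo.preimage (projPerp_continuous t)
    rintro y ⟨z, ⟨w, hw, rfl⟩, rfl⟩
    apply hIoo
    have hwf := hD'sub hw
    constructor
    · calc a ≤ c := hac
        _ < u := by simp only [hu]; linarith
        _ ≤ f w.1 := hwf.1
    · calc f w.1 ≤ v := hwf.2
        _ < d := by simp only [hv]; linarith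
        _ ≤ b := hdb
  · have hnormC : normT t (γ '' C) = d - c := by
      show Metric.diam (projPerp t '' (γ '' C)) = d - c
      rw [himg, hImg, Real.diam_Icc hcd.le]
    have hDsub : f '' (Subtype.val '' D') ⊆ Icc u v := by
      rintro y ⟨z, ⟨w, hw, rfl⟩, rfl⟩
      exact hD'sub hw
    have hbdd : Bornology.IsBounded (f '' (Subtype.val '' D')) :=
      (Metric.isBounded_Icc u v).subset hDsub
    have humem : u ∈ f '' (Subtype.val '' D') := ⟨pu.1, ⟨pu, hpu, rfl⟩, hpuu⟩
    have hvmem : v ∈ f '' (Subtype.val '' D') := ⟨qv.1, ⟨qv, hqv, rfl⟩, hqvv⟩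
    have hdiam : v - u ≤ Metric.diam (f '' (Subtype.val '' D')) := by
      have := Metric.dist_le_diam_of_mem hbdd humem hvmem
      rwa [Real.dist_eq, abs_of_nonpos (by linarith), neg_sub] at this
    have hnormD : normT t (γ '' (Subtype.val '' D')) = Metric.diam (f '' (Subtype.val '' D')) := by
      show Metric.diam (projPerp t '' (γ '' (Subtype.val '' D'))) = _
      rw [himg]
    rw [hnormC, hnormD]
    have : v - u = d - c - 2 * δ := by simp only [hu, hv]; ring
    linarith
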